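/- For the sum S = T + N + Φ of a nonnegative solution of the ODE system, S satisfies S'(t) = g(t)·(1 − S(t)/K) with g(t) ≥ 0; consequently, if S(0) < K then S is nondecreasing and S(t) ≤ K for all t ≥ 0, if S(0) = K then S(t) = K for all t, and if S(0) > K then S is nonincreasing with S(t) ≥ K. -/

import Mathlib

theorem sum_equation_monotonicity
    (S g : ℝ → ℝ) (K : ℝ) (hK : 0 < K)
    (hderiv : ∀ t, 0 ≤ t → HasDerivAt S (g t * (1 - S t / K)) t)
    (hg : ∀ t, 0 ≤ t → 0 ≤ g t) :
    (S 0 < K → MonotoneOn S (Set.Ici (0:ℝ)) ∧ ∀ t, 0 ≤ t → S t ≤ K) ∧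
    (S 0 = K → ∀ t, 0 ≤ t → S t = K) ∧
    (K < S 0 → AntitoneOn S (Set.Ici (0:ℝ)) ∧ ∀ t, 0 ≤ t → K ≤ S t) := by
  set v : ℝ → ℝ := fun t => (K - S t) ^ 2 with hv
  have hcontS : ContinuousOn S (Set.Ici (0:ℝ)) := fun t ht =>
    ((hderiv t ht).continuousAt).continuousWithinAt
  have hvderiv : ∀ t, 0 ≤ t →
      HasDerivAt v (2 * (K - S t) ^ 1 * (0 - g t * (1 - S t / K))) t := by
    intro t ht
    exact ((hasDerivAt_const t K).sub (hderiv t ht)).pow 2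
  have hvderiv_nonpos : ∀ t, 0 ≤ t →
      2 * (K - S t) ^ 1 * (0 - g t * (1 - S t / K)) ≤ 0 := by
    intro t ht
    have h1 : (1 : ℝ) - S t / K = (K - S t) / K := by field_simp
    have h2 : 2 * (K - S t) ^ 1 * (0 - g t * (1 - S t / K)) * K
        = -(2 * (g t * (K - S t) ^ 2)) := by rw [h1]; field_simp; ring
    nlinarith [mul_nonneg (hg t ht) (sq_nonneg (K - S t)), hK]
  have hcontv : ContinuousOn v (Set.Ici (0:ℝ)) := fun t ht =>
    ((hvderiv t ht).continuousAt).continuousWithinAt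
  have hdiffv : DifferentiableOn ℝ v (interior (Set.Ici (0:ℝ))) := by
    rw [interior_Ici]
    exact fun t ht => ((hvderiv t (le_of_lt ht)).differentiableAt).differentiableWithinAt
  have hvanti : AntitoneOn v (Set.Ici (0:ℝ)) := by
    apply antitoneOn_of_deriv_nonpos (convex_Ici 0) hcontv hdiffv
    intro t ht
    rw [interior_Ici] at ht
    rw [(hvderiv t (le_of_lt ht)).deriv]
    exact hvderiv_nonpos t (le_of_lt ht)
  -- sign preservation
  have hsign_pos : S 0 ≤ K → ∀ t, 0 ≤ t → S t ≤ K := by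
    intro h0 t ht
    by_contra hc
    push_neg at hc
    have ht0 : (0:ℝ) < t := by
      rcases ht.lt_or_eq with h | h
      · exact h
      · exfalso; rw [← h] at hc; linarith
    have hcu : ContinuousOn (fun x => K - S x) (Set.Icc 0 t) :=
      (continuousOn_const.sub hcontS).mono (Set.Icc_subset_Ici_self)
    have : (0:ℝ) ∈ Set.Icc (K - S t) (K - S 0) :=
      ⟨by linarith, by linarith⟩
    obtain ⟨t1, ht1, ht1eq⟩ := intermediate_value_Icc' (le_of_lt ht0) hcu this
    have hvt1 : v t1 = 0 := by
      simp only [hv]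
      have : K - S t1 = 0 := ht1eq
      rw [this]; ring
    have hle : v t ≤ v t1 := hvanti (Set.mem_Ici.2 ht1.1) (Set.mem_Ici.2 ht) ht1.2
    have hvt : v t = 0 := le_antisymm (by linarith [hle, hvt1]) (by positivity)
    have : K - S t = 0 := by
      have := pow_eq_zero_iff (n := 2) (by norm_num) |>.mp hvt
      exact this
    linarith
  have hsign_neg : K ≤ S 0 → ∀ t, 0 ≤ t → K ≤ S t := by
    intro h0 t ht
    by_contra hc
    push_neg at hc
    have ht0 : (0:ℝ) < t := by
      rcases ht.lt_or_eq with h | h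
      · exact h
      · exfalso; rw [← h] at hc; linarith
    have hcu : ContinuousOn (fun x => K - S x) (Set.Icc 0 t) :=
      (continuousOn_const.sub hcontS).mono (Set.Icc_subset_Ici_self)
    have : (0:ℝ) ∈ Set.Icc (K - S 0) (K - S t) :=
      ⟨by linarith, by linarith⟩
    obtain ⟨t1, ht1, ht1eq⟩ := intermediate_value_Icc (le_of_lt ht0) hcu this
    have hvt1 : v t1 = 0 := by
      simp only [hv]
      have : K - S t1 = 0 := ht1eq
      rw [this]; ring
    have hle : v t ≤ v t1 := hvanti (Set.mem_Ici.2 ht1.1) (Set.mem_Ici.2 ht) ht1.2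
    have hvt : v t = 0 := le_antisymm (by linarith [hle, hvt1]) (by positivity)
    have : K - S t = 0 := by
      have := pow_eq_zero_iff (n := 2) (by norm_num) |>.mp hvt
      exact this
    linarith
  refine ⟨?_, ?_, ?_⟩
  · intro h0
    have hbound : ∀ t, 0 ≤ t → S t ≤ K := hsign_pos (le_of_lt h0)
    refine ⟨?_, hbound⟩
    apply monotoneOn_of_deriv_nonneg (convex_Ici 0) hcontS
    · rw [interior_Ici]
      exact fun t ht => ((hderiv t (le_of_lt ht)).differentiableAt).differentiableWithinAt
    · intro t ht
      rw [interior_Ici] at ht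
      rw [(hderiv t (le_of_lt ht)).deriv]
      have h1 : 0 ≤ 1 - S t / K := by
        have := hbound t (le_of_lt ht)
        have : S t / K ≤ 1 := (div_le_one hK).mpr this
        linarith
      exact mul_nonneg (hg t (le_of_lt ht)) h1
  · intro h0 t ht
    have h1 := hsign_pos (le_of_eq h0) t ht
    have h2 := hsign_neg (ge_of_eq h0) t ht
    linarith
  · intro h0
    have hbound : ∀ t, 0 ≤ t → K ≤ S t := hsign_neg (le_of_lt h0)
    refine ⟨?_, hbound⟩
    apply antitoneOn_of_deriv_nonpos (convex_Ici 0) hcontS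
    · rw [interior_Ici]
      exact fun t ht => ((hderiv t (le_of_lt ht)).differentiableAt).differentiableWithinAt
    · intro t ht
      rw [interior_Ici] at ht
      rw [(hderiv t (le_of_lt ht)).deriv]
      have h1 : 1 - S t / K ≤ 0 := by
        have := hbound t (le_of_lt ht)
        have : 1 ≤ S t / K := (one_le_div hK).mpr this
        linarith
      exact mul_nonpos_of_nonneg_of_nonpos (hg t (le_of_lt ht)) h1
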